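/- Let t₀ ≥ 0 and let A : [t₀,∞) → (0,∞) be continuous with ∫_{t₀}^∞ A(t) dt = ∞. If Θ : [t₀,∞) → ℝ is a bounded twice differentiable function with Θ''(t) = A(t)Θ(t) for all t ≥ t₀, then Θ(t) → 0 as t → ∞. -/

import Mathlib

open MeasureTheory Filter Set
open scoped ENNReal

/-- `Θ`, with derivative `Θ'`, solves the second order linear ODE `Θ'' = A Θ` on the
half-line `[t₀, ∞)` (derivatives at the endpoint `t₀` are one-sided). -/
def IsSolOn (t₀ : ℝ) (A Θ Θ' : ℝ → ℝ) : Prop :=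
  ∀ t ∈ Set.Ici t₀,
    HasDerivWithinAt Θ (Θ' t) (Set.Ici t₀) t ∧
    HasDerivWithinAt Θ' (A t * Θ t) (Set.Ici t₀) t


lemma exists_integral_gt (t₀ : ℝ) (A : ℝ → ℝ) (hAc : ContinuousOn A (Set.Ici t₀))
    (hA0 : ∀ t ≥ t₀, 0 ≤ A t)
    (hAint : (∫⁻ t in Set.Ici t₀, ENNReal.ofReal (A t)) = ⊤) (K : ℝ) :
    ∃ b ≥ t₀, K < ∫ t in t₀..b, A t := by
  set f : ℝ → ℝ≥0∞ := fun t => ENNReal.ofReal (A t) with hf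
  have hIoi : (∫⁻ t in Set.Ioi t₀, f t) = ⊤ := by
    rw [Measure.restrict_congr_set Ioi_ae_eq_Ici, hAint]
  set s : ℕ → Set ℝ := fun n => Ioc (t₀ + n) (t₀ + n + 1) with hs
  have hs_union : ⋃ n, s n = Ioi t₀ := by
    ext x
    simp only [hs, mem_iUnion, mem_Ioc, mem_Ioi]
    constructor
    · rintro ⟨n, h1, _⟩
      have : (0:ℝ) ≤ n := n.cast_nonneg
      linarith
    · intro hx
      set y := x - t₀ with hy
      have hy0 : 0 < y := by simp [hy]; linarith
      set m := ⌈y⌉₊ with hm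
      have hm1 : 1 ≤ m := Nat.one_le_ceil_iff.2 hy0
      refine ⟨m - 1, ?_, ?_⟩
      · have h2 : (m:ℝ) < y + 1 := Nat.ceil_lt_add_one hy0.le
        have : ((m-1 : ℕ) : ℝ) = (m:ℝ) - 1 := by
          push_cast [Nat.cast_sub hm1]; ring
        rw [this]; linarith
      · have h3 : y ≤ m := Nat.le_ceil y
        have : ((m-1 : ℕ) : ℝ) = (m:ℝ) - 1 := by
          push_cast [Nat.cast_sub hm1]; ring
        rw [this]; linarith
  have hdisj : Pairwise (Function.onFun Disjoint s) := by
    refine (pairwise_disjoint_on s).2 fun i j hij => ?_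
    rw [Set.Ioc_disjoint_Ioc]
    have : (i:ℝ) + 1 ≤ j := by exact_mod_cast Nat.succ_le_of_lt hij
    exact le_trans (le_trans (min_le_left _ _) (by linarith)) (le_max_right _ _)
  have htsum : (∑' n, ∫⁻ t in s n, f t) = ⊤ := by
    rw [← lintegral_iUnion (fun n => measurableSet_Ioc) hdisj f, hs_union, hIoi]
  have htend := ENNReal.tendsto_nat_tsum (fun n => ∫⁻ t in s n, f t)
  rw [htsum] at htend
  have hKlt : ENNReal.ofReal K < ⊤ := ENNReal.ofReal_lt_top
  obtain ⟨N, hN⟩ := (htend.eventually_const_lt hKlt).exists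
  refine ⟨t₀ + N, by linarith [Nat.cast_nonneg (α := ℝ) N], ?_⟩
  set b := t₀ + (N:ℝ) with hb
  have hb0 : t₀ ≤ b := by simp [hb, Nat.cast_nonneg]
  have hsub : (⋃ i ∈ Finset.range N, s i) ⊆ Ioc t₀ b := by
    intro x hx
    simp only [Finset.mem_range, mem_iUnion, exists_prop] at hx
    obtain ⟨i, hiN, hi1, hi2⟩ := hx
    have : (i:ℝ) + 1 ≤ N := by exact_mod_cast Nat.succ_le_of_lt hiN
    have h0 : (0:ℝ) ≤ i := i.cast_nonneg
    exact ⟨by linarith, by simp only [hb]; linarith⟩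
  have hfin : (∑ i ∈ Finset.range N, ∫⁻ t in s i, f t) ≤ ∫⁻ t in Ioc t₀ b, f t := by
    rw [← lintegral_biUnion_finset (fun i _ j _ hij => hdisj hij)
      (fun i _ => measurableSet_Ioc) f]
    exact lintegral_mono_set hsub
  have hlt : ENNReal.ofReal K < ∫⁻ t in Ioc t₀ b, f t := lt_of_lt_of_le hN hfin
  have hInt : IntegrableOn A (Ioc t₀ b) volume :=
    ((hAc.mono (Icc_subset_Ici_self)).integrableOn_Icc).mono_set Ioc_subset_Icc_self
  have hnn : 0 ≤ᵐ[volume.restrict (Ioc t₀ b)] A := by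
    filter_upwards [ae_restrict_mem measurableSet_Ioc] with t ht
    exact hA0 t ht.1.le
  have heq : ENNReal.ofReal (∫ t in Ioc t₀ b, A t) = ∫⁻ t in Ioc t₀ b, f t :=
    ofReal_integral_eq_lintegral_ofReal hInt hnn
  rw [← heq] at hlt
  have : K < ∫ t in Ioc t₀ b, A t := by
    by_contra h
    exact absurd (ENNReal.ofReal_le_ofReal (not_lt.1 h)) (not_le.2 hlt)
  rwa [intervalIntegral.integral_of_le hb0]

theorem bounded_solution_tendsto_zero (t₀ : ℝ) (ht₀ : 0 ≤ t₀)
    (A : ℝ → ℝ) (hAc : ContinuousOn A (Set.Ici t₀)) (hApos : ∀ t ≥ t₀, 0 < A t)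
    (hAint : (∫⁻ t in Set.Ici t₀, ENNReal.ofReal (A t)) = ⊤)
    (Θ Θ' : ℝ → ℝ) (hsol : IsSolOn t₀ A Θ Θ')
    (hbdd : ∃ M, ∀ t ≥ t₀, |Θ t| ≤ M) :
    Filter.Tendsto Θ Filter.atTop (nhds 0) := by
  obtain ⟨M, hM⟩ := hbdd
  have hΘc : ContinuousOn Θ (Ici t₀) := fun t ht => (hsol t ht).1.continuousWithinAt
  have hΘ'c : ContinuousOn Θ' (Ici t₀) := fun t ht => (hsol t ht).2.continuousWithinAt
  set g : ℝ → ℝ := fun t => Θ t * Θ' t with hgdef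
  set g' : ℝ → ℝ := fun t => Θ' t * Θ' t + Θ t * (A t * Θ t) with hg'def
  have hg : ∀ t ∈ Ici t₀, HasDerivWithinAt g (g' t) (Ici t₀) t :=
    fun t ht => ((hsol t ht).1.mul (hsol t ht).2)
  have hgc : ContinuousOn g (Ici t₀) := hΘc.mul hΘ'c
  have hg'nn : ∀ t ∈ Ici t₀, 0 ≤ g' t := by
    intro t ht
    have hA := (hApos t ht).le
    have h1 : 0 ≤ Θ' t * Θ' t := mul_self_nonneg _
    have h2 : 0 ≤ A t * (Θ t * Θ t) := mul_nonneg hA (mul_self_nonneg _)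
    simp only [hg'def]; nlinarith
  have hIoiIci : Ioi t₀ ⊆ Ici t₀ := Ioi_subset_Ici_self
  -- g is monotone on [t₀, ∞)
  have hgmono : MonotoneOn g (Ici t₀) := by
    apply monotoneOn_of_hasDerivWithinAt_nonneg (convex_Ici t₀) hgc
    · intro x hx
      rw [interior_Ici] at hx ⊢
      exact (hg x (hIoiIci hx)).mono hIoiIci
    · intro x hx
      rw [interior_Ici] at hx
      exact hg'nn x (hIoiIci hx)
  -- g ≤ 0 on [t₀, ∞)
  have hgle : ∀ t ∈ Ici t₀, g t ≤ 0 := by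
    by_contra h
    push_neg at h
    obtain ⟨t₁, ht₁, hgt₁⟩ := h
    set c := g t₁ with hc
    have hM0 : 0 ≤ M := le_trans (abs_nonneg _) (hM t₀ le_rfl)
    set b := t₁ + (M ^ 2 + 1) / (2 * c) with hbdef
    have hcb : t₁ ≤ b := by
      have : 0 < (M ^ 2 + 1) / (2 * c) := by positivity
      simp only [hbdef]; linarith
    -- F t = Θ t * Θ t - 2 c t is monotone on [t₁, ∞)
    set F : ℝ → ℝ := fun t => Θ t * Θ t - 2 * c * t with hFdef
    have hIci₁ : Ici t₁ ⊆ Ici t₀ := Ici_subset_Ici.2 ht₁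
    have hFd : ∀ t ∈ Ici t₁, HasDerivWithinAt F (2 * g t - 2 * c) (Ici t₁) t := by
      intro t ht
      have h1 := (hsol t (hIci₁ ht)).1.mono hIci₁
      have := (h1.mul h1).sub ((hasDerivWithinAt_id t (Ici t₁)).const_mul (2 * c))
      refine this.congr_deriv ?_
      simp only [hgdef]; ring
    have hFmono : MonotoneOn F (Ici t₁) := by
      apply monotoneOn_of_hasDerivWithinAt_nonneg (convex_Ici t₁)
      · exact ((hΘc.mono hIci₁).mul (hΘc.mono hIci₁)).sub
          ((continuousOn_const).mul continuousOn_id)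
      · intro x hx
        rw [interior_Ici] at hx ⊢
        exact (hFd x (Ioi_subset_Ici_self hx)).mono Ioi_subset_Ici_self
      · intro x hx
        rw [interior_Ici] at hx
        have hgx : c ≤ g x := hgmono ht₁ (hIci₁ (Ioi_subset_Ici_self hx)) (le_of_lt hx)
        linarith
    have hFb := hFmono (self_mem_Ici) hcb hcb
    have hb0 : t₀ ≤ b := le_trans ht₁ hcb
    have h1 : |Θ b| ≤ M := hM b hb0
    have h2 : Θ b * Θ b ≤ M ^ 2 := by nlinarith [abs_nonneg (Θ b), sq_abs (Θ b)]
    have h3 : 2 * c * (b - t₁) = M ^ 2 + 1 := by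
      rw [hbdef]; field_simp; ring
    have h4 : 0 ≤ Θ t₁ * Θ t₁ := mul_self_nonneg _
    simp only [hFdef] at hFb
    nlinarith
  -- Θ² is antitone on [t₀, ∞)
  have hq : ∀ t ∈ Ici t₀, HasDerivWithinAt (fun t => Θ t * Θ t) (2 * g t) (Ici t₀) t := by
    intro t ht
    have h1 := (hsol t ht).1
    refine (h1.mul h1).congr_deriv ?_
    simp only [hgdef]; ring
  have hqanti : AntitoneOn (fun t => Θ t * Θ t) (Ici t₀) := by
    apply antitoneOn_of_hasDerivWithinAt_nonpos (convex_Ici t₀) (hΘc.mul hΘc)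
    · intro x hx
      rw [interior_Ici] at hx ⊢
      exact (hq x (hIoiIci hx)).mono hIoiIci
    · intro x hx
      rw [interior_Ici] at hx
      linarith [hgle x (hIoiIci hx)]
  -- the truncated square function
  set Q : ℝ → ℝ := fun t => Θ (max t t₀) * Θ (max t t₀) with hQdef
  have hQanti : Antitone Q := by
    intro u v huv
    exact hqanti (le_max_right u t₀) (le_max_right v t₀) (max_le_max huv le_rfl)
  have hQ0 : ∀ t, 0 ≤ Q t := fun t => mul_self_nonneg _
  have hQbdd : BddBelow (range Q) := ⟨0, fun y ⟨t, ht⟩ => ht ▸ hQ0 t⟩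
  have hQtend : Tendsto Q atTop (nhds (⨅ t, Q t)) := tendsto_atTop_ciInf hQanti hQbdd
  set c := ⨅ t, Q t with hcdef
  have hc0 : 0 ≤ c := le_ciInf hQ0
  have hcle : ∀ t, c ≤ Q t := fun t => ciInf_le hQbdd t
  -- c must be 0
  have hceq : c = 0 := by
    by_contra hcne
    have hcpos : 0 < c := lt_of_le_of_ne hc0 (Ne.symm hcne)
    obtain ⟨b, hb, hbint⟩ := exists_integral_gt t₀ A hAc (fun t ht => (hApos t ht).le)
      hAint ((0 - g t₀) / c)
    -- FTC for g on [t₀, b]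
    have hIcc : Icc t₀ b ⊆ Ici t₀ := Icc_subset_Ici_self
    have hg'c : ContinuousOn g' (Ici t₀) := by
      exact (hΘ'c.mul hΘ'c).add (hΘc.mul (hAc.mul hΘc))
    have hg'int : IntervalIntegrable g' volume t₀ b :=
      (hg'c.mono (by rw [uIcc_of_le hb]; exact hIcc)).intervalIntegrable
    have hftc : ∫ t in t₀..b, g' t = g b - g t₀ := by
      apply intervalIntegral.integral_eq_sub_of_hasDeriv_right_of_le hb (hgc.mono hIcc)
        (fun x hx => (hg x hx.1.le).mono (fun y hy => le_trans hx.1.le hy.le)) hg'int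
    have hAint' : IntervalIntegrable (fun t => c * A t) volume t₀ b := by
      apply ContinuousOn.intervalIntegrable
      rw [uIcc_of_le hb]
      exact (continuousOn_const.mul (hAc.mono hIcc))
    have hmono : ∫ t in t₀..b, c * A t ≤ ∫ t in t₀..b, g' t := by
      apply intervalIntegral.integral_mono_on hb hAint' hg'int
      intro x hx
      have hx0 : x ∈ Ici t₀ := hIcc hx
      have hQx : c ≤ Θ x * Θ x := by
        have := hcle x
        simp only [hQdef] at this
        rwa [max_eq_left hx0] at this
      have h1 : 0 ≤ Θ' x * Θ' x := mul_self_nonneg _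
      have h2 : c * A x ≤ A x * (Θ x * Θ x) :=
        by nlinarith [(hApos x hx0).le, hApos x hx0]
      simp only [hg'def]; nlinarith
    rw [intervalIntegral.integral_const_mul] at hmono
    have hgb := hgle b hb
    have hgt₀ := hgle t₀ self_mem_Ici
    have : (0 - g t₀) / c * c < (∫ t in t₀..b, A t) * c :=
      mul_lt_mul_of_pos_right hbint hcpos
    rw [div_mul_cancel₀ _ (ne_of_gt hcpos)] at this
    nlinarith
  -- conclude
  rw [hceq] at hQtend
  have habs : Tendsto (fun t => |Θ t|) atTop (nhds 0) := by
    have hsq : Tendsto (fun t => Real.sqrt (Q t)) atTop (nhds 0) := by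
      have := (Real.continuous_sqrt.tendsto 0).comp hQtend
      simpa [Function.comp_def] using this
    apply hsq.congr'
    filter_upwards [eventually_ge_atTop t₀] with t ht
    simp only [hQdef]
    rw [max_eq_left ht, ← Real.sqrt_mul_self (abs_nonneg (Θ t)), abs_mul_abs_self]
  rw [tendsto_zero_iff_abs_tendsto_zero]
  exact habs
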